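/- Fix p, q ∈ ℂ. For functions V, g : ℤ → ℝ, integers k ≥ 0 and x ∈ ℤ, define ψ(k,x) := Σ_{ε ∈ {−1,0,1}^k} (∏_{r=1}^k w(ε_r)) · exp(−i Σ_{r=0}^{k−1} V(x + ε_1 + ⋯ + ε_r)) · g(x + ε_1 + ⋯ + ε_k), where w(1) = w(−1) = p and w(0) = q. Then ψ satisfies the difference equation (1/i)(ψ(k+1,x) − ψ(k,x)) = (1/2) e^{−iV(x)} (ψ(k,x+1) − 2ψ(k,x) + ψ(k,x−1)) + (1/i)(e^{−iV(x)} − 1) ψ(k,x) for every choice of V, g and all k ≥ 0, x ∈ ℤ, if and only if p = i/2 and q = 1 − i. Moreover, when p = i/2 and q = 1 − i, ψ is the unique function of (k,x) satisfying this difference equation together with the initial condition ψ(0,x) = g(x) for all x ∈ ℤ. -/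

import Mathlib

open Complex

/-- The complex weight of a single step: `p` for steps `±1`, `q` for a step `0`. -/
noncomputable def stepw (p q : ℂ) (e : ℤ) : ℂ :=
  if e = 1 ∨ e = -1 then p else if e = 0 then q else 0

/-- Partial sum `ε_1 + ⋯ + ε_r` of the first `r` steps (`psum ε 0 = 0`). -/
def psum {k : ℕ} (ε : Fin k → ℤ) (r : ℕ) : ℤ :=
  ∑ s ∈ Finset.range r, if h : s < k then ε ⟨s, h⟩ else 0

/-- The discrete complex path integral
`ψ(k,x) = Σ_{ε ∈ {−1,0,1}^k} (∏ w(ε_r)) · exp(−i Σ_{r=0}^{k−1} V(x+ε_1+⋯+ε_r)) · g(x+ε_1+⋯+ε_k)`. -/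
noncomputable def psi (p q : ℂ) (V g : ℤ → ℝ) (k : ℕ) (x : ℤ) : ℂ :=
  ∑ ε ∈ Fintype.piFinset (fun _ : Fin k => ({-1, 0, 1} : Finset ℤ)),
    (∏ r : Fin k, stepw p q (ε r)) *
      Complex.exp (-Complex.I * ∑ r ∈ Finset.range k, ((V (x + psum ε r) : ℝ) : ℂ)) *
      ((g (x + psum ε k) : ℝ) : ℂ)

lemma psum_zero {k : ℕ} (ε : Fin k → ℤ) : psum ε 0 = 0 := by simp [psum]

lemma psum_cons {k : ℕ} (e : ℤ) (δ : Fin k → ℤ) (r : ℕ) :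
    psum (Fin.cons e δ) (r + 1) = e + psum δ r := by
  unfold psum
  rw [Finset.sum_range_succ']
  simp only [Nat.zero_lt_succ, dif_pos, Fin.cons_zero, Nat.add_lt_add_iff_right]
  rw [add_comm]
  congr 1

lemma sum_piFinset_cons {M : Type*} [AddCommMonoid M] {k : ℕ} (S : Finset ℤ)
    (f : (Fin (k + 1) → ℤ) → M) :
    ∑ ε ∈ Fintype.piFinset (fun _ : Fin (k + 1) => S), f ε
      = ∑ e ∈ S, ∑ δ ∈ Fintype.piFinset (fun _ : Fin k => S), f (Fin.cons e δ) := by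
  rw [← Finset.sum_product']
  refine Finset.sum_nbij' (fun ε => (ε 0, Fin.tail ε)) (fun P => Fin.cons P.1 P.2)
    ?_ ?_ ?_ ?_ ?_
  · intro a ha
    simp only [Fintype.mem_piFinset] at ha
    simp [Finset.mem_product, Fintype.mem_piFinset, Fin.tail, ha]
  · intro P hP
    simp only [Finset.mem_product, Fintype.mem_piFinset] at hP
    simp only [Fintype.mem_piFinset]
    intro a
    refine Fin.cases ?_ ?_ a
    · simpa using hP.1
    · intro i; simpa using hP.2 i
  · intro a _; exact Fin.cons_self_tail a
  · intro P _; simp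
  · intro a _; rw [Fin.cons_self_tail]

lemma psi_zero (p q : ℂ) (V g : ℤ → ℝ) (x : ℤ) : psi p q V g 0 x = ((g x : ℝ) : ℂ) := by
  simp [psi, psum_zero]

lemma psi_succ (p q : ℂ) (V g : ℤ → ℝ) (k : ℕ) (x : ℤ) :
    psi p q V g (k + 1) x =
      Complex.exp (-Complex.I * ((V x : ℝ) : ℂ)) *
        (p * psi p q V g k (x + 1) + q * psi p q V g k x + p * psi p q V g k (x - 1)) := by
  rw [psi, sum_piFinset_cons]
  have key : ∀ e : ℤ,
      (∑ δ ∈ Fintype.piFinset (fun _ : Fin k => ({-1, 0, 1} : Finset ℤ)),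
        (∏ r : Fin (k + 1), stepw p q ((Fin.cons e δ : Fin (k+1) → ℤ) r)) *
          Complex.exp (-Complex.I *
            ∑ r ∈ Finset.range (k + 1), ((V (x + psum (Fin.cons e δ : Fin (k+1) → ℤ) r) : ℝ) : ℂ)) *
          ((g (x + psum (Fin.cons e δ : Fin (k+1) → ℤ) (k + 1)) : ℝ) : ℂ))
        = stepw p q e *
            (Complex.exp (-Complex.I * ((V x : ℝ) : ℂ)) * psi p q V g k (x + e)) := by
    intro e
    rw [psi, Finset.mul_sum, Finset.mul_sum]
    apply Finset.sum_congr rfl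
    intro δ _
    have hV : (∑ r ∈ Finset.range (k + 1), ((V (x + psum (Fin.cons e δ : Fin (k+1) → ℤ) r) : ℝ) : ℂ))
        = ((V x : ℝ) : ℂ) + ∑ r ∈ Finset.range k, ((V ((x + e) + psum δ r) : ℝ) : ℂ) := by
      rw [Finset.sum_range_succ']
      rw [add_comm]
      congr 1
      · simp [psum_zero]
      · apply Finset.sum_congr rfl
        intro r _
        rw [psum_cons, add_assoc]
    have hg : x + psum (Fin.cons e δ : Fin (k+1) → ℤ) (k + 1) = (x + e) + psum δ k := by
      rw [psum_cons, add_assoc]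
    rw [hV, hg, Fin.prod_univ_succ]
    simp only [Fin.cons_zero, Fin.cons_succ, mul_add, Complex.exp_add]
    ring
  rw [Finset.sum_congr rfl (fun e _ => key e)]
  have : ({-1, 0, 1} : Finset ℤ) = {-1, 0, 1} := rfl
  rw [show ({-1, 0, 1} : Finset ℤ) = insert (-1) (insert 0 {1}) from rfl]
  rw [Finset.sum_insert (by decide), Finset.sum_insert (by decide), Finset.sum_singleton]
  have h1 : stepw p q 1 = p := by simp [stepw]
  have h2 : stepw p q (-1) = p := by norm_num [stepw]
  have h3 : stepw p q 0 = q := by norm_num [stepw]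
  rw [h1, h2, h3]
  have e1 : x + -1 = x - 1 := by ring
  have e2 : x + 0 = x := by ring
  rw [e1, e2]
  ring

lemma alg_id (a b c E : ℂ) :
    (1 / Complex.I) * (E * (Complex.I / 2 * a + (1 - Complex.I) * b + Complex.I / 2 * c) - b) =
      (1 / 2) * E * (a - 2 * b + c) + (1 / Complex.I) * (E - 1) * b := by
  rw [one_div, Complex.inv_I]
  linear_combination (-(E * a / 2 - E * b + E * c / 2)) * Complex.I_sq

lemma psi_diffEq (V g : ℤ → ℝ) :
    ∀ (k : ℕ) (x : ℤ),
    (1 / Complex.I) * (psi (Complex.I/2) (1-Complex.I) V g (k + 1) x - psi (Complex.I/2) (1-Complex.I) V g k x) =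
      (1 / 2) * Complex.exp (-Complex.I * ((V x : ℝ) : ℂ)) *
          (psi (Complex.I/2) (1-Complex.I) V g k (x + 1) - 2 * psi (Complex.I/2) (1-Complex.I) V g k x + psi (Complex.I/2) (1-Complex.I) V g k (x - 1)) +
        (1 / Complex.I) * (Complex.exp (-Complex.I * ((V x : ℝ) : ℂ)) - 1) * psi (Complex.I/2) (1-Complex.I) V g k x := by
  intro k x
  rw [psi_succ]
  exact alg_id _ _ _ _

/-- The complex difference equation corresponding to the Schrödinger equation. -/
def DiffEq (V : ℤ → ℝ) (φ : ℕ → ℤ → ℂ) : Prop :=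
  ∀ (k : ℕ) (x : ℤ),
    (1 / Complex.I) * (φ (k + 1) x - φ k x) =
      (1 / 2) * Complex.exp (-Complex.I * ((V x : ℝ) : ℂ)) *
          (φ k (x + 1) - 2 * φ k x + φ k (x - 1)) +
        (1 / Complex.I) * (Complex.exp (-Complex.I * ((V x : ℝ) : ℂ)) - 1) * φ k x

lemma diff_step {V : ℤ → ℝ} {φ : ℕ → ℤ → ℂ} (h : DiffEq V φ) (k : ℕ) (x : ℤ) :
    φ (k + 1) x = φ k x + Complex.I *
      ((1 / 2) * Complex.exp (-Complex.I * ((V x : ℝ) : ℂ)) *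
          (φ k (x + 1) - 2 * φ k x + φ k (x - 1)) +
        (1 / Complex.I) * (Complex.exp (-Complex.I * ((V x : ℝ) : ℂ)) - 1) * φ k x) := by
  rw [← h k x]
  field_simp
  linear_combination

/-- `ψ` solves the difference equation for every `V`, `g` iff `p = i/2` and `q = 1 − i`;
moreover in that case `ψ` is the unique solution with initial condition `ψ(0,x) = g(x)`. -/
theorem psi_solves_diffEq_iff (p q : ℂ) :
    ((∀ V g : ℤ → ℝ, DiffEq V (psi p q V g)) ↔ (p = Complex.I / 2 ∧ q = 1 - Complex.I)) ∧
    (p = Complex.I / 2 → q = 1 - Complex.I →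
      ∀ (V g : ℤ → ℝ) (φ : ℕ → ℤ → ℂ),
        DiffEq V φ → (∀ x : ℤ, φ 0 x = ((g x : ℝ) : ℂ)) → φ = psi p q V g) := by
  constructor
  · constructor
    · intro H
      have h1 := H (fun _ => 0) (fun y => if y = 1 then 1 else 0) 0 0
      have h0 := H (fun _ => 0) (fun y => if y = 0 then 1 else 0) 0 0
      simp only [psi_succ, psi_zero] at h1 h0
      norm_num at h1 h0
      constructor
      · field_simp at h1
        linear_combination (Complex.I / 2) * h1 + p * Complex.I_sq
      · linear_combination (-Complex.I) * h0 + (q - 1) * Complex.I_sq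
    · rintro ⟨hp, hq⟩ V g
      rw [hp, hq]
      exact psi_diffEq V g
  · intro hp hq V g φ hφ h0
    subst hp hq
    have hpsi : DiffEq V (psi (Complex.I / 2) (1 - Complex.I) V g) := psi_diffEq V g
    have main : ∀ k : ℕ, ∀ x : ℤ, φ k x = psi (Complex.I / 2) (1 - Complex.I) V g k x := by
      intro k
      induction k with
      | zero => intro x; rw [h0 x, psi_zero]
      | succ k ih =>
        intro x
        rw [diff_step hφ k x, diff_step hpsi k x, ih, ih, ih]
    funext k x
    exact main k x
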